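/- arXiv:1101.2151 — 5 statements merged into one kernel-verified Lean document; each statement's English description precedes it below -/
import Mathlib

section
/- Let F₂ = F(t₁,t₂) be the free group on two generators and let w ∈ F₂. If the pair (t₁, w t₂ w⁻¹) generates F₂, then w = t₁ⁿ t₂ᵐ for some integers n, m. -/
/-- The free group on two generators. -/
abbrev F2 : Type := FreeGroup (Fin 2)

/-- The first generator `t₁`. -/
def t1 : F2 := FreeGroup.of 0

/-- The second generator `t₂`. -/
def t2 : F2 := FreeGroup.of 1

set_option linter.unusedSectionVars false


open FreeGroup List

namespace S1
variable {α : Type*} [DecidableEq α]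

/-- no cancellation between adjacent letters -/
def R (p q : α × Bool) : Prop := ¬(p.1 = q.1 ∧ p.2 = !q.2)

lemma chain'_reduce (L : List (α × Bool)) : (FreeGroup.reduce L).Chain' R := by
  induction L with
  | nil => exact List.isChain_nil
  | cons x L ih =>
    rw [reduce.cons]
    rcases h : FreeGroup.reduce L with _ | ⟨hd, tl⟩
    · exact List.isChain_singleton _
    · rw [h] at ih
      by_cases hc : x.1 = hd.1 ∧ x.2 = !hd.2
      · simp only [hc, if_true]
        exact ih.tail
      · simp only [hc, if_false]
        exact List.isChain_cons_cons.mpr ⟨hc, ih⟩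

lemma reduce_eq_self_of_chain' (L : List (α × Bool)) (h : L.Chain' R) :
    FreeGroup.reduce L = L := by
  induction L with
  | nil => simp
  | cons x L ih =>
    rw [reduce.cons, ih h.tail]
    rcases L with _ | ⟨hd, tl⟩
    · rfl
    · have hr : R x hd := List.isChain_cons_cons.mp h |>.1
      simp only [R] at hr
      simp [hr]

lemma chain'_toWord (x : FreeGroup α) : x.toWord.Chain' R := by
  have := chain'_reduce (α := α) x.toWord
  rwa [reduce_toWord] at this

lemma toWord_mk_of_chain' (L : List (α × Bool)) (h : L.Chain' R) :
    (FreeGroup.mk L).toWord = L := by rw [toWord_mk, reduce_eq_self_of_chain' L h]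

end S1

namespace S1
variable {α : Type*} [DecidableEq α]

def zword (i : α) (a : ℤ) : List (α × Bool) := List.replicate a.natAbs (i, decide (0 ≤ a))

lemma mem_zword {i : α} {a : ℤ} {p : α × Bool} (h : p ∈ zword i a) : p.1 = i := by
  rw [zword, List.mem_replicate] at h
  rw [h.2]

lemma chain'_zword (i : α) (a : ℤ) : (zword i a).Chain' R := by
  rw [zword]
  apply List.isChain_replicate_of_rel  -- guess name
  simp [R]

lemma zpow_of_eq_mk (i : α) (a : ℤ) : (FreeGroup.of i) ^ a = FreeGroup.mk (zword i a) := by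
  have hpos : ∀ n : ℕ, (FreeGroup.of i) ^ n = FreeGroup.mk (List.replicate n (i, true)) := by
    intro n
    rw [← toWord_of_pow i n, mk_toWord]
  rcases a with n | n
  · simpa [zword] using hpos n
  · have : (FreeGroup.of i) ^ (Int.negSucc n) = ((FreeGroup.of i) ^ (n+1 : ℕ))⁻¹ := by
      rw [zpow_negSucc]
    rw [this, hpos, inv_mk]
    congr 1
    simp [invRev, zword, List.map_replicate]

lemma invRev_head? (L : List (α × Bool)) :
    (invRev L).head? = L.getLast?.map (fun p => (p.1, !p.2)) := by
  rw [invRev, List.head?_reverse, List.getLast?_map]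

lemma invRev_getLast? (L : List (α × Bool)) :
    (invRev L).getLast? = L.head?.map (fun p => (p.1, !p.2)) := by
  rw [invRev, List.getLast?_reverse, List.head?_map]

lemma chain'_invRev {L : List (α × Bool)} (h : L.Chain' R) : (invRev L).Chain' R := by
  rw [invRev, List.Chain', List.isChain_reverse, List.isChain_map]
  apply h.imp
  intro p q hpq
  simp only [R, flip] at *
  rintro ⟨h1, h2⟩
  exact hpq ⟨h1.symm, by simpa using h2.symm⟩

end S1

set_option linter.unusedSectionVars false


namespace S1
section Core

variable (v : F2)

/-- the conjugated generator -/
def u : F2 := v * t2 * v⁻¹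

def blockW (a b : ℤ) : List (Fin 2 × Bool) :=
  zword 0 a ++ v.toWord ++ zword 1 b ++ invRev v.toWord

def wordOf (l : List (ℤ × ℤ)) (c : ℤ) : List (Fin 2 × Bool) :=
  (l.map fun p => blockW v p.1 p.2).flatten ++ zword 0 c

def evalD (l : List (ℤ × ℤ)) (c : ℤ) : F2 :=
  (l.map fun p => t1 ^ p.1 * (u v) ^ p.2).prod * t1 ^ c

def validL (l : List (ℤ × ℤ)) : Prop :=
  (∀ p ∈ l, p.2 ≠ 0) ∧ (∀ p ∈ l.tail, p.1 ≠ 0)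

lemma evalD_eq_mk (l : List (ℤ × ℤ)) (c : ℤ) :
    evalD v l c = FreeGroup.mk (wordOf v l c) := by
  induction l with
  | nil => simp [evalD, wordOf, t1, zpow_of_eq_mk]
  | cons p l ih =>
    have hu : (u v) ^ p.2 = v * t2 ^ p.2 * v⁻¹ := conj_zpow
    have hinv : FreeGroup.mk (invRev v.toWord) = v⁻¹ := by
      rw [← inv_mk, mk_toWord]
    have : evalD v (p :: l) c = t1 ^ p.1 * (v * (t2 ^ p.2 * (v⁻¹ * evalD v l c))) := by
      simp only [evalD, List.map_cons, List.prod_cons, hu]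
      group
    rw [this, ih, t1, t2, zpow_of_eq_mk, zpow_of_eq_mk]
    simp only [wordOf, blockW, List.map_cons, List.flatten_cons, List.append_assoc, ← mul_mk]
    rw [mk_toWord, hinv]

end Core
end S1

namespace S1
section Core2

lemma toWord_ne_nil {v : F2} (hne : v ≠ 1) : v.toWord ≠ [] := by
  simpa [toWord_eq_nil_iff] using hne

lemma zword_ne_nil {i : Fin 2} {a : ℤ} (ha : a ≠ 0) : zword i a ≠ [] := by
  simp [zword, Int.natAbs_eq_zero, ha]

lemma chain'_blockW {v : F2} (hne : v ≠ 1)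
    (hhead : ∀ p ∈ v.toWord.head?, p.1 ≠ (0 : Fin 2))
    (hlast : ∀ p ∈ v.toWord.getLast?, p.1 ≠ (1 : Fin 2))
    {a b : ℤ} (hb : b ≠ 0) : (blockW v a b).Chain' R := by
  have hL := toWord_ne_nil hne
  rw [blockW]
  apply List.isChain_append.mpr
  refine ⟨?_, chain'_invRev (chain'_toWord v), ?_⟩
  · apply List.isChain_append.mpr
    refine ⟨?_, chain'_zword 1 b, ?_⟩
    · apply List.isChain_append.mpr
      refine ⟨chain'_zword 0 a, chain'_toWord v, ?_⟩
      · intro x hx y hy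
        have hx0 : x.1 = 0 := mem_zword (List.mem_of_mem_getLast? hx)
        have hy0 : y.1 ≠ 0 := hhead y hy
        exact fun hc => hy0 (by rw [← hc.1, hx0])
    · intro x hx y hy
      rw [List.getLast?_append_of_ne_nil _ hL] at hx
      have hx1 : x.1 ≠ 1 := hlast x hx
      have hy1 : y.1 = 1 := mem_zword (List.mem_of_mem_head? hy)
      exact fun hc => hx1 (by rw [hc.1, hy1])
  · intro x hx y hy
    rw [List.getLast?_append_of_ne_nil _ (zword_ne_nil hb)] at hx
    have hx1 : x.1 = 1 := mem_zword (List.mem_of_mem_getLast? hx)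
    rw [invRev_head?, Option.mem_map] at hy
    obtain ⟨q, hq, rfl⟩ := hy
    have hq1 : q.1 ≠ 1 := hlast q hq
    exact fun hc => hq1 (by rw [← hc.1, hx1])

end Core2
end S1

namespace S1
section Core3

variable {v : F2} (hne : v ≠ 1)
    (hhead : ∀ p ∈ v.toWord.head?, p.1 ≠ (0 : Fin 2))
    (hlast : ∀ p ∈ v.toWord.getLast?, p.1 ≠ (1 : Fin 2))

include hne hhead in
lemma last_blockW {a b : ℤ} : ∀ x ∈ (blockW v a b).getLast?, x.1 ≠ (0 : Fin 2) := by
  intro x hx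
  have hL := toWord_ne_nil hne
  have hinv : invRev v.toWord ≠ [] := by
    simpa [invRev] using hL
  rw [blockW, List.getLast?_append_of_ne_nil _ hinv, invRev_getLast?, Option.mem_map] at hx
  obtain ⟨q, hq, rfl⟩ := hx
  exact hhead q hq

include hne in
lemma head_blockW {a b : ℤ} (ha : a ≠ 0) : ∀ y ∈ (blockW v a b).head?, y.1 = (0 : Fin 2) := by
  intro y hy
  rw [blockW, List.append_assoc, List.append_assoc,
    List.head?_append_of_ne_nil _ (zword_ne_nil ha)] at hy
  exact mem_zword (List.mem_of_mem_head? hy)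

include hne hhead in
lemma head_wordOf {l : List (ℤ × ℤ)} {c : ℤ} (hl : ∀ q ∈ l.head?, q.1 ≠ (0 : ℤ)) :
    ∀ y ∈ (wordOf v l c).head?, y.1 = (0 : Fin 2) := by
  intro y hy
  rcases l with _ | ⟨p, l'⟩
  · rw [wordOf] at hy
    simp only [List.map_nil, List.flatten_nil, List.nil_append] at hy
    exact mem_zword (List.mem_of_mem_head? hy)
  · have hp : p.1 ≠ 0 := hl p rfl
    have hbne : blockW v p.1 p.2 ≠ [] := by
      have hL := toWord_ne_nil hne
      simp [blockW, hL]
    rw [wordOf, List.map_cons, List.flatten_cons, List.append_assoc,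
      List.head?_append_of_ne_nil _ hbne] at hy
    exact head_blockW hne hp y hy

include hne hhead hlast in
lemma chain'_wordOf {l : List (ℤ × ℤ)} {c : ℤ} (hval : validL l) :
    (wordOf v l c).Chain' R := by
  induction l with
  | nil =>
    rw [wordOf]
    simpa using chain'_zword (0 : Fin 2) c
  | cons p l' ih =>
    have hval' : validL l' := by
      refine ⟨fun q hq => hval.1 q (List.mem_cons_of_mem _ hq), fun q hq => ?_⟩
      exact hval.2 q (List.mem_of_mem_tail hq)
    have hw : wordOf v (p :: l') c = blockW v p.1 p.2 ++ wordOf v l' c := by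
      rw [wordOf, wordOf, List.map_cons, List.flatten_cons, List.append_assoc]
    rw [hw]
    apply List.isChain_append.mpr
    refine ⟨chain'_blockW hne hhead hlast (hval.1 p List.mem_cons_self), ih hval', ?_⟩
    intro x hx y hy
    have hx0 := last_blockW hne hhead x hx
    have hy0 : y.1 = 0 := by
      refine head_wordOf hne hhead (fun q hq => ?_) y hy
      exact hval.2 q (List.mem_of_mem_head? hq)
    exact fun hc => hx0 (hc.1.trans hy0)

include hne hhead hlast in
lemma toWord_evalD {l : List (ℤ × ℤ)} {c : ℤ} (hval : validL l) :
    (evalD v l c).toWord = wordOf v l c := by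
  rw [evalD_eq_mk, toWord_mk_of_chain' _ (chain'_wordOf hne hhead hlast hval)]

end Core3
end S1

namespace S1
section Core4

variable {v : F2}

lemma evalD_nil (c : ℤ) : evalD v [] c = t1 ^ c := by simp [evalD]

lemma evalD_concat {l : List (ℤ × ℤ)} {a b c : ℤ} :
    evalD v (l ++ [(a, b)]) c = evalD v l a * (u v) ^ b * t1 ^ c := by
  simp only [evalD, List.map_append, List.prod_append, List.map_cons, List.map_nil,
    List.prod_cons, List.prod_nil]
  group

lemma evalD_mul_t1 {l : List (ℤ × ℤ)} {c : ℤ} (d : ℤ) :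
    evalD v l c * t1 ^ d = evalD v l (c + d) := by
  simp only [evalD]
  rw [mul_assoc, ← zpow_add]

lemma validL_concat {l : List (ℤ × ℤ)} {a b : ℤ} (h : validL l) (hb : b ≠ 0)
    (ha : l = [] ∨ a ≠ 0) : validL (l ++ [(a, b)]) := by
  constructor
  · intro p hp
    rcases List.mem_append.mp hp with hp | hp
    · exact h.1 p hp
    · simp at hp; rw [hp]; exact hb
  · intro p hp
    rcases l with _ | ⟨q, l'⟩
    · simp at hp
    · rcases ha with ha | ha
      · simp at ha
      · simp only [List.cons_append, List.tail_cons] at hp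
        rcases List.mem_append.mp hp with hp | hp
        · exact h.2 p hp
        · simp at hp; rw [hp]; exact ha

lemma validL_of_concat {l : List (ℤ × ℤ)} {a b : ℤ} (h : validL (l ++ [(a, b)])) :
    validL l ∧ b ≠ 0 ∧ (l = [] ∨ a ≠ 0) := by
  refine ⟨⟨fun p hp => h.1 p (List.mem_append_left _ hp), fun p hp => ?_⟩, ?_, ?_⟩
  · rcases l with _ | ⟨q, l'⟩
    · simp at hp
    · exact h.2 p (by simp only [List.cons_append, List.tail_cons]; exact List.mem_append_left _ hp)
  · exact h.1 (a, b) (List.mem_append_right _ (by simp))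
  · rcases l with _ | ⟨q, l'⟩
    · exact Or.inl rfl
    · refine Or.inr (h.2 (a, b) ?_)
      simp only [List.cons_append, List.tail_cons]
      exact List.mem_append_right _ (by simp)

/-- The invariant is preserved by right multiplication by `u ^ ε`. -/
lemma inv_mul_u {l : List (ℤ × ℤ)} {c : ℤ} (hval : validL l) {ε : ℤ} (hε : ε ≠ 0) :
    ∃ l' c', validL l' ∧ evalD v l c * (u v) ^ ε = evalD v l' c' := by
  by_cases hc : c = 0
  · subst hc
    rcases List.eq_nil_or_concat l with rfl | ⟨l', ⟨a, b⟩, rfl⟩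
    · refine ⟨[(0, ε)], 0, ?_, ?_⟩
      · exact validL_concat (l := []) ⟨by simp, by simp⟩ hε (Or.inl rfl)
      · rw [evalD_nil]
        rw [show ([((0:ℤ), ε)]) = [] ++ [((0:ℤ), ε)] by simp, evalD_concat, evalD_nil]
        group
    · rw [List.concat_eq_append] at hval ⊢
      obtain ⟨hval', hb, ha⟩ := validL_of_concat hval
      have hg : evalD v (l' ++ [(a, b)]) 0 * (u v) ^ ε = evalD v l' a * (u v) ^ (b + ε) := by
        rw [evalD_concat, zpow_zero, mul_one, mul_assoc, ← zpow_add]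
      by_cases hbe : b + ε = 0
      · refine ⟨l', a, hval', ?_⟩
        rw [hg, hbe, zpow_zero, mul_one]
      · refine ⟨l' ++ [(a, b + ε)], 0, validL_concat hval' hbe ha, ?_⟩
        rw [hg, evalD_concat, zpow_zero, mul_one]
  · refine ⟨l ++ [(c, ε)], 0, validL_concat hval hε (Or.inr hc), ?_⟩
    rw [evalD_concat, zpow_zero, mul_one]

lemma mem_closure_inv (hne : v ≠ 1)
    (hhead : ∀ p ∈ v.toWord.head?, p.1 ≠ (0 : Fin 2))
    (hlast : ∀ p ∈ v.toWord.getLast?, p.1 ≠ (1 : Fin 2)) :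
    t2 ∉ Subgroup.closure ({t1, u v} : Set F2) := by
  intro hmem
  have key : ∀ g, g ∈ Subgroup.closure ({t1, u v} : Set F2) →
      ∃ l c, validL l ∧ g = evalD v l c := by
    intro g hg
    induction hg using Subgroup.closure_induction_right with
    | one => exact ⟨[], 0, ⟨by simp, by simp⟩, by rw [evalD_nil, zpow_zero]⟩
    | mul_right x hx y hy ih =>
      obtain ⟨l, c, hval, rfl⟩ := ih
      rcases hy with rfl | hy
      · refine ⟨l, c + 1, hval, ?_⟩
        rw [← evalD_mul_t1 1, zpow_one]
      · rw [Set.mem_singleton_iff] at hy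
        subst hy
        have := inv_mul_u (v := v) (c := c) hval (ε := 1) one_ne_zero
        rw [zpow_one] at this
        obtain ⟨l', c', hval', heq⟩ := this
        exact ⟨l', c', hval', heq⟩
    | mul_inv_cancel x hx y hy ih =>
      obtain ⟨l, c, hval, rfl⟩ := ih
      rcases hy with rfl | hy
      · refine ⟨l, c + (-1), hval, ?_⟩
        rw [← evalD_mul_t1 (-1), zpow_neg_one]
      · rw [Set.mem_singleton_iff] at hy
        subst hy
        have := inv_mul_u (v := v) (c := c) hval (ε := -1) (by norm_num)
        rw [zpow_neg_one] at this
        obtain ⟨l', c', hval', heq⟩ := this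
        exact ⟨l', c', hval', heq⟩
  obtain ⟨l, c, hval, heq⟩ := key t2 hmem
  have hword : t2.toWord = wordOf v l c := by
    rw [heq, toWord_evalD hne hhead hlast hval]
  rw [show t2 = FreeGroup.of 1 from rfl, toWord_of] at hword
  rcases l with _ | ⟨⟨a, b⟩, l'⟩
  · have hmem1 : ((1 : Fin 2), true) ∈ wordOf v [] c := by
      rw [← hword]; simp
    rw [wordOf] at hmem1
    simp only [List.map_nil, List.flatten_nil, List.nil_append] at hmem1
    have := mem_zword hmem1
    simp at this
  · have hb : b ≠ 0 := hval.1 (a, b) (by simp)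
    have hlen := congrArg List.length hword
    have hw : wordOf v ((a, b) :: l') c =
        blockW v a b ++ wordOf v l' c := by
      rw [wordOf, wordOf, List.map_cons, List.flatten_cons, List.append_assoc]
    rw [hw] at hlen
    have hLpos : 0 < v.toWord.length := by
      have := toWord_ne_nil hne
      exact List.length_pos_iff.mpr this
    have hbpos : 0 < b.natAbs := Int.natAbs_pos.mpr hb
    simp only [List.length_cons, List.length_nil, List.length_append, blockW,
      invRev_length, zword, List.length_replicate] at hlen
    omega

end Core4
end S1

namespace S1

lemma of_eq_mk {α} (x : α) : FreeGroup.of x = FreeGroup.mk [(x, true)] := rfl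

lemma strip_left (i : Fin 2) : ∀ (k : ℕ) (w : F2), w.toWord.length ≤ k →
    ∃ (n : ℤ) (v : F2), w = (FreeGroup.of i) ^ n * v ∧ ∀ p ∈ v.toWord.head?, p.1 ≠ i := by
  intro k
  induction k with
  | zero =>
    intro w hw
    refine ⟨0, w, by rw [zpow_zero, one_mul], ?_⟩
    have : w.toWord = [] := List.length_eq_zero_iff.mp (Nat.le_zero.mp hw)
    simp [this]
  | succ k ih =>
    intro w hw
    rcases hW : w.toWord with _ | ⟨⟨j, e⟩, W'⟩
    · exact ⟨0, w, by rw [zpow_zero, one_mul], by simp [hW]⟩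
    by_cases hj : j = i
    · subst hj
      set s : ℤ := if e then 1 else -1 with hs
      have h1 : (FreeGroup.of j) ^ (-s) = FreeGroup.mk [(j, !e)] := by
        cases e
        · rw [of_eq_mk]; norm_num [hs]
        · rw [of_eq_mk]
          norm_num [hs]
          simp [invRev]
      have hred : FreeGroup.reduce ((j, e) :: W') = (j, e) :: W' := by
        rw [← hW, reduce_toWord]
      have hw' : ((FreeGroup.of j) ^ (-s) * w).toWord = W' := by
        rw [h1]
        nth_rewrite 1 [← mk_toWord (x := w)]
        rw [mul_mk, hW, List.singleton_append, toWord_mk, reduce.cons, hred]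
        simp
      have hlen : W'.length ≤ k := by
        have := hw
        rw [hW] at this
        simpa using this
      obtain ⟨n, v, hv, hhead⟩ := ih ((FreeGroup.of j) ^ (-s) * w) (by rw [hw']; exact hlen)
      refine ⟨s + n, v, ?_, hhead⟩
      have hback : w = (FreeGroup.of j) ^ s * ((FreeGroup.of j) ^ (-s) * w) := by group
      rw [hback, hv, ← mul_assoc, ← zpow_add]
    · refine ⟨0, w, by rw [zpow_zero, one_mul], ?_⟩
      intro p hp
      rw [hW] at hp
      simp only [List.head?_cons, Option.mem_some_iff] at hp
      rw [← hp]
      exact hj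

lemma strip_right (i : Fin 2) (w : F2) :
    ∃ (m : ℤ) (v : F2), w = v * (FreeGroup.of i) ^ m ∧ ∀ p ∈ v.toWord.getLast?, p.1 ≠ i := by
  obtain ⟨n, v, hv, hhead⟩ := strip_left i w⁻¹.toWord.length w⁻¹ le_rfl
  refine ⟨-n, v⁻¹, ?_, ?_⟩
  · have : w = (FreeGroup.of i ^ n * v)⁻¹ := by rw [← hv, inv_inv]
    rw [this, mul_inv_rev, zpow_neg]
  · intro p hp
    rw [toWord_inv, invRev_getLast?, Option.mem_map] at hp
    obtain ⟨q, hq, rfl⟩ := hp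
    exact hhead q hq

lemma closure_conj {G : Type*} [Group G] (t x : G) (n : ℤ) :
    Subgroup.closure {t, t ^ n * x * t ^ (-n)} = Subgroup.closure {t, x} := by
  apply _root_.le_antisymm
  · rw [Subgroup.closure_le]
    rintro y (rfl | hy)
    · exact Subgroup.subset_closure (Set.mem_insert _ _)
    · rw [Set.mem_singleton_iff] at hy
      subst hy
      have ht : t ∈ Subgroup.closure ({t, x} : Set G) :=
        Subgroup.subset_closure (Set.mem_insert _ _)
      have hx : x ∈ Subgroup.closure ({t, x} : Set G) :=
        Subgroup.subset_closure (Set.mem_insert_of_mem _ rfl)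
      exact SetLike.mem_coe.mpr (mul_mem (mul_mem (zpow_mem ht n) hx) (zpow_mem ht (-n)))
  · rw [Subgroup.closure_le]
    rintro y (rfl | hy)
    · exact Subgroup.subset_closure (Set.mem_insert _ _)
    · rw [Set.mem_singleton_iff] at hy
      subst hy
      have ht : t ∈ Subgroup.closure ({t, t ^ n * y * t ^ (-n)} : Set G) :=
        Subgroup.subset_closure (Set.mem_insert _ _)
      have hc : t ^ n * y * t ^ (-n) ∈ Subgroup.closure ({t, t ^ n * y * t ^ (-n)} : Set G) :=
        Subgroup.subset_closure (Set.mem_insert_of_mem _ rfl)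
      have hy' : y = t ^ (-n) * (t ^ n * y * t ^ (-n)) * t ^ n := by group
      have hmem := mul_mem (mul_mem (zpow_mem ht (-n)) hc) (zpow_mem ht n)
      rw [← hy'] at hmem
      exact SetLike.mem_coe.mpr hmem

end S1

namespace S1

lemma toWord_zpow_mul {v : F2} (n : ℤ)
    (hhead : ∀ p ∈ v.toWord.head?, p.1 ≠ (0 : Fin 2)) :
    ((FreeGroup.of (0 : Fin 2)) ^ n * v).toWord = zword 0 n ++ v.toWord := by
  nth_rewrite 1 [← mk_toWord (x := v)]
  rw [zpow_of_eq_mk, mul_mk]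
  apply toWord_mk_of_chain'
  apply List.isChain_append.mpr
  refine ⟨chain'_zword 0 n, chain'_toWord v, ?_⟩
  intro x hx y hy
  have hx0 : x.1 = 0 := mem_zword (List.mem_of_mem_getLast? hx)
  exact fun hc => hhead y hy (by rw [← hc.1, hx0])

end S1

/-- If `(t₁, w t₂ w⁻¹)` generates `F₂`, then `w = t₁ⁿ t₂ᵐ` for some integers `n, m`. -/
theorem stmt1 (w : F2)
    (h : Subgroup.closure ({t1, w * t2 * w⁻¹} : Set F2) = ⊤) :
    ∃ n m : ℤ, w = t1 ^ n * t2 ^ m := by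
  obtain ⟨m, v1, hw1, hlast1⟩ := S1.strip_right 1 w
  obtain ⟨n, v, hv1, hhead⟩ := S1.strip_left 0 v1.toWord.length v1 le_rfl
  have ht1 : t1 = FreeGroup.of (0 : Fin 2) := rfl
  have ht2 : t2 = FreeGroup.of (1 : Fin 2) := rfl
  by_cases hv : v = 1
  · refine ⟨n, m, ?_⟩
    rw [hw1, hv1, hv, mul_one, ht1, ht2]
  · exfalso
    have hlastv : ∀ p ∈ v.toWord.getLast?, p.1 ≠ (1 : Fin 2) := by
      intro p hp
      apply hlast1
      rw [hv1, S1.toWord_zpow_mul n hhead,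
        List.getLast?_append_of_ne_nil _ (S1.toWord_ne_nil hv)]
      exact hp
    have hw2 : w * t2 * w⁻¹ = t1 ^ n * (S1.u v) * t1 ^ (-n) := by
      rw [hw1, hv1, S1.u, ht1, ht2]
      group
    rw [hw2, S1.closure_conj t1 (S1.u v) n] at h
    have hmem : t2 ∈ Subgroup.closure ({t1, S1.u v} : Set F2) := by
      rw [h]; exact Subgroup.mem_top t2
    exact S1.mem_closure_inv hv hhead hlastv hmem
end

section
/- In the free group F₂ on generators t₁, t₂, the element w₁ = t₁ t₂ t₁⁻¹ t₂⁻¹ t₁ is not primitive. -/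
/-- An element of `F₂` is primitive if it belongs to some generating pair of `F₂`
(by Nielsen's theorem, any generating pair is automatically a free basis). -/
def Primitive (w : F2) : Prop := ∃ z : F2, Subgroup.closure ({w, z} : Set F2) = ⊤

/-- The image of `t₁` in `S₃`: a 3-cycle. -/
def aPerm : Equiv.Perm (Fin 3) := finRotate 3

/-- The image of `t₂` in `S₃`: a transposition. -/
def bPerm : Equiv.Perm (Fin 3) := Equiv.swap 0 1

/-- The homomorphism `F₂ → S₃`. -/
def phi : F2 →* Equiv.Perm (Fin 3) :=
  FreeGroup.lift (fun i => if i = 0 then aPerm else bPerm)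

lemma phi_t1 : phi t1 = aPerm := by
  simp [phi, t1]

lemma phi_t2 : phi t2 = bPerm := by
  simp [phi, t2]

lemma phi_w : phi (t1 * t2 * t1⁻¹ * t2⁻¹ * t1) = 1 := by
  simp only [map_mul, map_inv, phi_t1, phi_t2]
  decide

lemma ab_ne_ba : aPerm * bPerm ≠ bPerm * aPerm := by decide

/-- The element `w₁ = t₁ t₂ t₁⁻¹ t₂⁻¹ t₁` is not primitive in `F₂`. -/
theorem stmt9 : ¬ Primitive (t1 * t2 * t1⁻¹ * t2⁻¹ * t1) := by
  rintro ⟨z, hz⟩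
  set w : F2 := t1 * t2 * t1⁻¹ * t2⁻¹ * t1 with hw
  -- map the generating condition through phi
  have hmap : Subgroup.map phi (Subgroup.closure ({w, z} : Set F2))
      = Subgroup.closure (phi '' ({w, z} : Set F2)) :=
    (MonoidHom.map_closure phi _).symm ▸ rfl
  have himg : phi '' ({w, z} : Set F2) = {phi w, phi z} := by
    simp [Set.image_insert_eq]
  have hle : Subgroup.map phi (Subgroup.closure ({w, z} : Set F2))
      ≤ Subgroup.zpowers (phi z) := by
    rw [MonoidHom.map_closure, himg, Subgroup.closure_le]
    rintro x (rfl | rfl)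
    · rw [phi_w]; exact one_mem _
    · exact Subgroup.mem_zpowers _
  rw [hz] at hle
  have ha : aPerm ∈ Subgroup.zpowers (phi z) := by
    have : phi t1 ∈ Subgroup.map phi ⊤ := ⟨t1, trivial, rfl⟩
    rw [phi_t1] at this
    exact hle this
  have hb : bPerm ∈ Subgroup.zpowers (phi z) := by
    have : phi t2 ∈ Subgroup.map phi ⊤ := ⟨t2, trivial, rfl⟩
    rw [phi_t2] at this
    exact hle this
  obtain ⟨m, hm⟩ := ha
  obtain ⟨n, hn⟩ := hb
  apply ab_ne_ba
  rw [← hm, ← hn]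
  exact (Commute.zpow_zpow_self (phi z) m n)
end

section
/- Let p : X̂ → X be a regular covering of path-connected spaces with basepoints x̂₀ ↦ x₀, let A ⊆ X be a path-connected subset containing x₀ with inclusion i : A → X, and let Â = p⁻¹(A). Then Â is path-connected if and only if p₊(π₁(X̂, x̂₀)) · i₊(π₁(A, x₀)) = π₁(X, x₀). -/
open CategoryTheory

/-- The homomorphism induced on fundamental groups by a continuous map. -/
noncomputable def inducedHom {X Y : TopCat} (f : X ⟶ Y) (x : X) :
    FundamentalGroup X x →* FundamentalGroup Y (f x) :=
  (FundamentalGroupoid.fundamentalGroupoidFunctor.map f).mapEnd (FundamentalGroupoid.mk x)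

open unitInterval Set

noncomputable section

variable {E X : Type*} [TopologicalSpace E] [TopologicalSpace X] {p : E → X}

namespace IsCoveringMap

theorem exists_path_lift (hp : IsCoveringMap p) (γ : C(I, X)) (e₀ : E)
    (he : p e₀ = γ 0) : ∃ Γ : C(I, E), Γ 0 = e₀ ∧ ∀ t, p (Γ t) = γ t := by
  obtain ⟨Γ, h1, h2⟩ := hp.exists_path_lifts γ e₀ he.symm
  exact ⟨Γ, h2, fun t => congrFun h1 t⟩

/-- The lift of a path `γ : C(I, X)` through a covering map, starting at `e₀`. -/
def pathLift (hp : IsCoveringMap p) (γ : C(I, X)) (e₀ : E) (he : p e₀ = γ 0) : C(I, E) :=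
  (hp.exists_path_lift γ e₀ he).choose

@[simp] theorem pathLift_zero (hp : IsCoveringMap p) (γ : C(I, X)) (e₀ : E) (he : p e₀ = γ 0) :
    hp.pathLift γ e₀ he 0 = e₀ :=
  (hp.exists_path_lift γ e₀ he).choose_spec.1

theorem pathLift_proj (hp : IsCoveringMap p) (γ : C(I, X)) (e₀ : E) (he : p e₀ = γ 0) (s : I) :
    p (hp.pathLift γ e₀ he s) = γ s :=
  (hp.exists_path_lift γ e₀ he).choose_spec.2 s

theorem pathLift_unique (hp : IsCoveringMap p) (γ : C(I, X)) (e₀ : E) (he : p e₀ = γ 0)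
    (Γ : C(I, E)) (h0 : Γ 0 = e₀) (hl : ∀ s, p (Γ s) = γ s) :
    ∀ s, Γ s = hp.pathLift γ e₀ he s := by
  have := hp.eq_of_comp_eq (g₁ := fun s : I => Γ s)
    (g₂ := fun s => hp.pathLift γ e₀ he s) Γ.continuous
    (hp.pathLift γ e₀ he).continuous
    (funext fun s => by simp only [Function.comp_apply, hl s, hp.pathLift_proj γ e₀ he s])
    0 (by show Γ 0 = hp.pathLift γ e₀ he 0; rw [h0, pathLift_zero])
  exact fun s => congrFun this s

end IsCoveringMap

lemma isPreconnected_Icc_I (a b : I) : _root_.IsPreconnected (Icc a b : Set I) := by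
  rcases le_or_gt a b with hab | hab
  · have key : (Icc a b : Set I) = (fun r : ℝ => projIcc 0 1 zero_le_one r) '' (Icc (a : ℝ) b) := by
      ext y
      constructor
      · rintro ⟨h1, h2⟩
        exact ⟨y, ⟨h1, h2⟩, projIcc_val zero_le_one y⟩
      · rintro ⟨r, ⟨hr1, hr2⟩, rfl⟩
        constructor
        · rw [← projIcc_val zero_le_one a]
          exact monotone_projIcc zero_le_one hr1
        · rw [← projIcc_val zero_le_one b]
          exact monotone_projIcc zero_le_one hr2
    rw [key]
    exact isPreconnected_Icc.image _ continuous_projIcc.continuousOn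
  · rw [Icc_eq_empty (not_le.2 hab)]
    exact isPreconnected_empty

namespace IsCoveringMap

theorem monodromy' (hp : IsCoveringMap p) (H : C(I × I, X)) (e₀ : E)
    (hhe : ∀ s, p e₀ = H.curry s 0) (x₁ : X) (hH1 : ∀ s : I, H (s, 1) = x₁) (s₀ s₁ : I) :
    hp.pathLift (H.curry s₀) e₀ (hhe s₀) 1 = hp.pathLift (H.curry s₁) e₀ (hhe s₁) 1 := by
  classical
  set F : I → E := fun s => hp.pathLift (H.curry s) e₀ (hhe s) 1 with hF
  have hFfib : ∀ s, p (F s) ∈ ({x₁} : Set X) := fun s => by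
    rw [hF]
    show p (hp.pathLift (H.curry s) e₀ (hhe s) 1) ∈ _
    rw [hp.pathLift_proj (H.curry s) e₀ (hhe s) 1]
    exact hH1 s
  -- local constancy
  have hloc : ∀ s₀ : I, ∀ᶠ s in nhds s₀, F s = F s₀ := by
    intro s₀
    -- trivializations
    have hne : ∀ τ : I, Nonempty ↥(p ⁻¹' {H.curry s₀ τ}) := fun τ =>
      ⟨⟨hp.pathLift (H.curry s₀) e₀ (hhe s₀) τ, hp.pathLift_proj (H.curry s₀) e₀ (hhe s₀) τ⟩⟩
    set T : (τ : I) → Bundle.Trivialization (↥(p ⁻¹' {H.curry s₀ τ})) p :=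
      fun τ => (hp (H.curry s₀ τ)).toTrivialization with hT
    have hmemT : ∀ τ, H.curry s₀ τ ∈ (T τ).baseSet := fun τ => (hp _).mem_toTrivialization_baseSet
    obtain ⟨t, ht0, htmono, ⟨m, htm⟩, hsub⟩ :=
      exists_monotone_Icc_subset_open_cover_unitInterval
        (c := fun τ : I => (H.curry s₀) ⁻¹' (T τ).baseSet)
        (fun τ => (T τ).open_baseSet.preimage (H.curry s₀).continuous)
        (fun τ _ => mem_iUnion.2 ⟨τ, hmemT τ⟩)
    choose xs hxs using hsub
    -- tube lemma
    have tube : ∀ n : ℕ, ∃ u : Set I, IsOpen u ∧ s₀ ∈ u ∧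
        ∀ s ∈ u, ∀ τ ∈ Icc (t n) (t (n + 1)), H (s, τ) ∈ (T (xs n)).baseSet := by
      intro n
      have hWopen : IsOpen (H ⁻¹' (T (xs n)).baseSet) :=
        (T (xs n)).open_baseSet.preimage H.continuous
      have hsubW : ({s₀} : Set I) ×ˢ Icc (t n) (t (n + 1)) ⊆ H ⁻¹' (T (xs n)).baseSet := by
        rintro ⟨s, τ⟩ ⟨hs, hτ⟩
        rw [mem_singleton_iff] at hs
        subst hs
        exact hxs n hτ
      obtain ⟨u, v, hu, _, hsu, hIv, huv⟩ := generalized_tube_lemma isCompact_singleton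
        (isClosed_Icc.isCompact) hWopen hsubW
      exact ⟨u, hu, hsu rfl, fun s hs τ hτ => huv ⟨hs, hIv hτ⟩⟩
    choose u hu hs₀u hubase using tube
    set N : Set I := ⋂ n ∈ Finset.range (m + 1), u n with hN
    have hNnhds : N ∈ nhds s₀ := by
      refine (isOpen_biInter_finset fun n _ => hu n).mem_nhds ?_
      exact mem_biInter fun n _ => hs₀u n
    have hNsub : ∀ n, n ≤ m → ∀ s ∈ N, s ∈ u n := by
      intro n hn s hs
      exact mem_iInter₂.1 hs n (Finset.mem_range.2 (Nat.lt_succ_of_le hn))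
    -- the induction
    have claim : ∀ n, n ≤ m →
        ContinuousOn (fun s => hp.pathLift (H.curry s) e₀ (hhe s) (t n)) N := by
      intro n
      induction n with
      | zero =>
        intro _
        refine (continuousOn_const (c := e₀)).congr fun s _ => ?_
        rw [ht0]
        exact hp.pathLift_zero (H.curry s) e₀ (hhe s)
      | succ n ih =>
        intro hn1
        have hn : n ≤ m := Nat.le_of_succ_le hn1
        set Tn := T (xs n) with hTn
        have htle : t n ≤ t (n + 1) := htmono (Nat.le_succ n)
        have hbaseS : ∀ s ∈ N, ∀ τ ∈ Icc (t n) (t (n + 1)), H (s, τ) ∈ Tn.baseSet :=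
          fun s hs => hubase n s (hNsub n hn s hs)
        have hltproj : ∀ s (τ : I), p (hp.pathLift (H.curry s) e₀ (hhe s) τ) = H (s, τ) :=
          fun s τ => hp.pathLift_proj (H.curry s) e₀ (hhe s) τ
        have key : ∀ s ∈ N, hp.pathLift (H.curry s) e₀ (hhe s) (t (n + 1)) =
            Tn.toOpenPartialHomeomorph.symm (H (s, t (n + 1)),
              (Tn (hp.pathLift (H.curry s) e₀ (hhe s) (t n))).2) := by
          intro s hs
          set L := hp.pathLift (H.curry s) e₀ (hhe s) with hL
          set c := (Tn (L (t n))).2 with hc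
          have hLsrc : L (t n) ∈ Tn.source := by
            rw [Tn.mem_source, hltproj s (t n)]
            exact hbaseS s hs (t n) ⟨le_refl _, htle⟩
          have heqon : (Icc (t n) (t (n + 1))).EqOn (fun τ => L τ)
              (fun τ => Tn.toOpenPartialHomeomorph.symm (H (s, τ), c)) := by
            apply hp.eqOn_of_comp_eqOn (isPreconnected_Icc_I _ _)
              L.continuous.continuousOn
            · refine ContinuousOn.comp Tn.toOpenPartialHomeomorph.continuousOn_symm ?_ ?_
              · exact ((H.continuous.comp
                  (continuous_const.prodMk continuous_id)).prodMk
                  continuous_const).continuousOn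
              · intro τ hτ
                exact Tn.mem_target.2 (hbaseS s hs τ hτ)
            · intro τ hτ
              show p (L τ) = p (Tn.toOpenPartialHomeomorph.symm (H (s, τ), c))
              rw [hltproj s τ, Tn.proj_symm_apply' (hbaseS s hs τ hτ)]
            · exact ⟨le_refl _, htle⟩
            · show L (t n) = Tn.toOpenPartialHomeomorph.symm (H (s, t n), c)
              rw [← hltproj s (t n), hc]
              exact (Tn.symm_apply_mk_proj hLsrc).symm
          exact heqon ⟨htle, le_refl _⟩
        have hcont2 : ContinuousOn (fun s => Tn.toOpenPartialHomeomorph.symm (H (s, t (n + 1)),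
            (Tn (hp.pathLift (H.curry s) e₀ (hhe s) (t n))).2)) N := by
          have hinner : ContinuousOn (fun s => hp.pathLift (H.curry s) e₀ (hhe s) (t n)) N :=
            ih hn
          have hTnapp : ContinuousOn
              (fun s => Tn (hp.pathLift (H.curry s) e₀ (hhe s) (t n))) N := by
            refine ContinuousOn.comp Tn.toOpenPartialHomeomorph.continuousOn hinner ?_
            intro s hs
            rw [Tn.mem_source, hltproj s (t n)]
            exact hbaseS s hs (t n) ⟨le_refl _, htle⟩
          have hpair : ContinuousOn (fun s => ((H (s, t (n + 1))),
              (Tn (hp.pathLift (H.curry s) e₀ (hhe s) (t n))).2)) N :=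
            ((H.continuous.comp (continuous_id.prodMk continuous_const)).continuousOn).prodMk
              (continuous_snd.comp_continuousOn hTnapp)
          refine ContinuousOn.comp Tn.toOpenPartialHomeomorph.continuousOn_symm hpair ?_
          intro s hs
          rw [Tn.target_eq]
          exact ⟨hbaseS s hs (t (n + 1)) ⟨htle, le_refl _⟩, trivial⟩
        exact hcont2.congr key
    have hFcont : ContinuousOn F N := by
      refine (claim m le_rfl).congr fun s _ => ?_
      rw [hF]
      show hp.pathLift (H.curry s) e₀ (hhe s) 1 = hp.pathLift (H.curry s) e₀ (hhe s) (t m)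
      rw [htm m le_rfl]
    -- discreteness of the fiber
    have hdisc : DiscreteTopology ↥(p ⁻¹' {x₁}) := (hp x₁).1
    have : IsOpen ({⟨F s₀, hFfib s₀⟩} : Set ↥(p ⁻¹' {x₁})) := isOpen_discrete _
    obtain ⟨U, hUopen, hUeq⟩ := isOpen_induced_iff.1 this
    have hUonly : ∀ e ∈ U, p e = x₁ → e = F s₀ := by
      intro e heU hex₁
      have h2 : (⟨e, hex₁⟩ : ↥(p ⁻¹' {x₁})) ∈ Subtype.val ⁻¹' U := heU
      rw [hUeq] at h2
      exact congrArg Subtype.val h2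
    have hFU : F s₀ ∈ U := by
      have h2 : (⟨F s₀, hFfib s₀⟩ : ↥(p ⁻¹' {x₁})) ∈ Subtype.val ⁻¹' U := by
        rw [hUeq]; rfl
      exact h2
    have hs₀N : s₀ ∈ N := mem_of_mem_nhds hNnhds
    have h1 : F ⁻¹' U ∈ nhdsWithin s₀ N := (hFcont s₀ hs₀N) (hUopen.mem_nhds hFU)
    rw [nhdsWithin_eq_nhds.2 hNnhds] at h1
    filter_upwards [h1] with s hsU
    exact hUonly (F s) hsU (hFfib s)
  -- clopen argument
  have hS : IsClopen {s : I | F s = F s₁} := by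
    constructor
    · rw [← isOpen_compl_iff]
      rw [isOpen_iff_mem_nhds]
      intro a ha
      filter_upwards [hloc a] with s hs hFs
      exact ha (hs.symm.trans hFs)
    · rw [isOpen_iff_mem_nhds]
      intro a ha
      filter_upwards [hloc a] with s hs
      rw [hs, ha]
  have := hS.eq_univ ⟨s₁, rfl⟩
  have hs₀ : s₀ ∈ {s : I | F s = F s₁} := this ▸ mem_univ s₀
  exact hs₀

end IsCoveringMap

namespace IsCoveringMap

variable (hp : IsCoveringMap p)

/-- Lift of a bundled path. -/
def liftP {x y : X} (γ : Path x y) (e₀ : E) (he : p e₀ = x) : C(I, E) :=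
  hp.pathLift γ.toContinuousMap e₀ (by rw [he]; exact γ.source.symm)

@[simp] theorem liftP_zero {x y : X} (γ : Path x y) (e₀ : E) (he : p e₀ = x) :
    hp.liftP γ e₀ he 0 = e₀ := hp.pathLift_zero _ _ _

theorem liftP_proj {x y : X} (γ : Path x y) (e₀ : E) (he : p e₀ = x) (s : I) :
    p (hp.liftP γ e₀ he s) = γ s := hp.pathLift_proj _ _ _ s

theorem liftP_unique {x y : X} (γ : Path x y) (e₀ : E) (he : p e₀ = x)
    (Γ : C(I, E)) (h0 : Γ 0 = e₀) (hl : ∀ s, p (Γ s) = γ s) :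
    ∀ s, Γ s = hp.liftP γ e₀ he s :=
  hp.pathLift_unique _ _ _ Γ h0 hl

/-- The lift as a bundled path. -/
def liftPath' {x y : X} (γ : Path x y) (e₀ : E) (he : p e₀ = x) :
    Path e₀ (hp.liftP γ e₀ he 1) where
  toContinuousMap := hp.liftP γ e₀ he
  source' := hp.liftP_zero γ e₀ he
  target' := rfl

theorem liftP_homotopic {x y : X} (γ₀ γ₁ : Path x y) (h : γ₀.Homotopic γ₁)
    (e₀ : E) (he : p e₀ = x) :
    hp.liftP γ₀ e₀ he 1 = hp.liftP γ₁ e₀ he 1 := by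
  obtain ⟨H⟩ := h
  have hhe : ∀ s, p e₀ = H.toContinuousMap.curry s 0 := by
    intro s
    show p e₀ = H (s, 0)
    rw [H.eq_fst s (by norm_num : (0 : I) ∈ ({0, 1} : Set I))]
    show p e₀ = γ₀ 0
    rw [γ₀.source, he]
  have h1 : ∀ s, H (s, 1) = y := fun s => by
    rw [H.eq_fst s (by norm_num : (1 : I) ∈ ({0, 1} : Set I))]; exact γ₀.target
  have hmono := hp.monodromy' H.toContinuousMap e₀ hhe y h1 0 1
  have e0 : ∀ s, hp.liftP γ₀ e₀ he s =
      hp.pathLift (H.toContinuousMap.curry 0) e₀ (hhe 0) s := by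
    refine hp.pathLift_unique _ _ _ _ (hp.liftP_zero γ₀ e₀ he) fun s => ?_
    rw [hp.liftP_proj γ₀ e₀ he s]
    exact (H.apply_zero s).symm
  have e1 : ∀ s, hp.liftP γ₁ e₀ he s =
      hp.pathLift (H.toContinuousMap.curry 1) e₀ (hhe 1) s := by
    refine hp.pathLift_unique _ _ _ _ (hp.liftP_zero γ₁ e₀ he) fun s => ?_
    rw [hp.liftP_proj γ₁ e₀ he s]
    exact (H.apply_one s).symm
  rw [e0 1, e1 1]
  exact hmono

theorem liftP_trans {x y z : X} (γ : Path x y) (γ' : Path y z) (e₀ : E) (he : p e₀ = x)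
    (he' : p (hp.liftP γ e₀ he 1) = y) :
    hp.liftP (γ.trans γ') e₀ he 1 = hp.liftP γ' (hp.liftP γ e₀ he 1) he' 1 := by
  set m₁ := hp.liftP γ e₀ he 1 with hm₁
  set P₁ : Path e₀ m₁ := hp.liftPath' γ e₀ he with hP₁
  set m₂ := hp.liftP γ' m₁ he' 1 with hm₂
  set P₂ : Path m₁ m₂ := hp.liftPath' γ' m₁ he' with hP₂
  have key : ∀ s, (P₁.trans P₂) s = hp.liftP (γ.trans γ') e₀ he s := by
    refine hp.liftP_unique (γ.trans γ') e₀ he (P₁.trans P₂).toContinuousMap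
      (P₁.trans P₂).source fun s => ?_
    show p ((P₁.trans P₂) s) = (γ.trans γ') s
    rw [Path.trans_apply, Path.trans_apply]
    split_ifs with h
    · exact hp.liftP_proj γ e₀ he _
    · exact hp.liftP_proj γ' m₁ he' _
  have h1 := key 1
  rw [Path.trans_apply] at h1
  norm_num at h1
  exact h1.symm

end IsCoveringMap

end

attribute [local instance] Path.Homotopic.setoid

lemma aut_ext' {X : TopCat} {x : X} {a b : FundamentalGroup X x} (h : a.toPath = b.toPath) : a = b :=
  h

lemma mem_transported_range {Y X : TopCat} (f : Y ⟶ X) (y₀ : Y) {z : X} (h : f y₀ = z)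
    (u : FundamentalGroup X z) :
    u ∈ (h ▸ (inducedHom f y₀).range : Subgroup (FundamentalGroup X z)) ↔
      ∃ g : Path y₀ y₀, u.toPath =
        (⟦(g.map f.hom.continuous).cast h.symm h.symm⟧ : Path.Homotopic.Quotient z z) := by
  subst h
  have hcast : ∀ g : Path y₀ y₀, (g.map f.hom.continuous).cast rfl rfl = g.map f.hom.continuous :=
    fun g => rfl
  constructor
  · rintro ⟨c, rfl⟩
    obtain ⟨g, hg⟩ := Quotient.exists_rep (c : Path.Homotopic.Quotient y₀ y₀)
    refine ⟨g, ?_⟩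
    show (FundamentalGroupoid.fundamentalGroupoidFunctor.map f).map c = _
    rw [← hg, hcast]
    exact (Path.Homotopic.Quotient.mk_map g f.hom).symm
  · rintro ⟨g, hu⟩
    refine ⟨FundamentalGroup.fromPath ⟦g⟧, aut_ext' ?_⟩
    rw [hu, hcast]
    show (FundamentalGroupoid.fundamentalGroupoidFunctor.map f).map ⟦g⟧ = _
    exact (Path.Homotopic.Quotient.mk_map g f.hom).symm

lemma normal_transport {X : TopCat} {y z : X} (h : y = z) (S : Subgroup (FundamentalGroup X y))
    (hS : S.Normal) : (h ▸ S : Subgroup (FundamentalGroup X z)).Normal := by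
  subst h; exact hS

lemma swap_mul {G : Type*} [Group G] {U V : Subgroup G} (hU : U.Normal) (g : G) :
    (∃ u ∈ U, ∃ v ∈ V, g = u * v) ↔ ∃ v ∈ V, ∃ u ∈ U, g = v * u := by
  constructor
  · rintro ⟨u, hu, v, hv, rfl⟩
    exact ⟨v, hv, v⁻¹ * u * v, by simpa using hU.conj_mem u hu v⁻¹, by group⟩
  · rintro ⟨v, hv, u, hu, rfl⟩
    exact ⟨v * u * v⁻¹, hU.conj_mem u hu v, v, hv, by group⟩


/-- Let `p : X̂ → X` be a regular covering of path-connected spaces, `A ⊆ X` a path-connected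
subset containing the basepoint `x₀ = p x̂₀`, with inclusion `i : A → X`.  Then `p⁻¹(A)` is
path-connected if and only if `p₊(π₁(X̂, x̂₀)) · i₊(π₁(A, a₀)) = π₁(X, x₀)`. -/
theorem stmt15 {Xhat X : TopCat} (p : Xhat ⟶ X) (hp : IsCoveringMap p)
    [PathConnectedSpace Xhat] [PathConnectedSpace X]
    (A : Set X) (hA : IsPathConnected A)
    (i : TopCat.of (↥A) ⟶ X) (hi : ∀ a : ↥A, i a = (a : X))
    (a₀ : ↥A) (xhat₀ : Xhat) (hpx : p xhat₀ = (a₀ : X))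
    (hreg : (MonoidHom.range (inducedHom p xhat₀)).Normal) :
    IsPathConnected (p ⁻¹' A) ↔
      ∀ g : FundamentalGroup X (a₀ : X),
        ∃ u ∈ (hpx ▸ (inducedHom p xhat₀).range : Subgroup (FundamentalGroup X (a₀ : X))),
          ∃ v ∈ (hi a₀ ▸ (inducedHom i a₀).range : Subgroup (FundamentalGroup X (a₀ : X))),
            g = u * v := by
  classical
  have hx₀A : (a₀ : X) ∈ A := a₀.2
  have hxhat₀ : xhat₀ ∈ ⇑p ⁻¹' A := by
    rw [Set.mem_preimage, hpx]; exact hx₀A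
  have hnorm : (hpx ▸ (inducedHom p xhat₀).range :
      Subgroup (FundamentalGroup X (a₀ : X))).Normal :=
    normal_transport hpx _ hreg
  have hU : ∀ u : FundamentalGroup X (a₀ : X),
      u ∈ (hpx ▸ (inducedHom p xhat₀).range : Subgroup (FundamentalGroup X (a₀ : X))) ↔
      ∃ g : Path xhat₀ xhat₀, u.toPath =
        (⟦(g.map p.hom.continuous).cast hpx.symm hpx.symm⟧ :
          Path.Homotopic.Quotient (a₀ : X) (a₀ : X)) :=
    fun u => mem_transported_range p xhat₀ hpx u
  have hV : ∀ v : FundamentalGroup X (a₀ : X),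
      v ∈ (hi a₀ ▸ (inducedHom i a₀).range : Subgroup (FundamentalGroup X (a₀ : X))) ↔
      ∃ α : Path a₀ a₀, v.toPath =
        (⟦(α.map i.hom.continuous).cast (hi a₀).symm (hi a₀).symm⟧ :
          Path.Homotopic.Quotient (a₀ : X) (a₀ : X)) :=
    fun v => mem_transported_range i a₀ (hi a₀) v
  constructor
  · -- path connectedness implies the decomposition
    intro hPC g
    rw [swap_mul hnorm g]
    obtain ⟨δ, hδ⟩ := Quotient.exists_rep g.toPath
    set zz := hp.liftP δ xhat₀ hpx 1 with hzz
    have hpz : p zz = (a₀ : X) := by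
      rw [hzz, hp.liftP_proj]; exact δ.target
    have hzzA : zz ∈ ⇑p ⁻¹' A := by rw [Set.mem_preimage, hpz]; exact hx₀A
    obtain ⟨b, hbmem, hjoin⟩ := hPC
    have J : JoinedIn (⇑p ⁻¹' A) zz xhat₀ := (hjoin hzzA).symm.trans (hjoin hxhat₀)
    set lam := J.somePath with hlamdef
    have hlam : ∀ t, lam t ∈ ⇑p ⁻¹' A := J.somePath_mem
    set α : Path a₀ a₀ :=
      ⟨⟨fun t => ⟨p (lam t), hlam t⟩, by
          exact (p.hom.continuous.comp lam.continuous).subtype_mk _⟩,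
        Subtype.ext (by show p (lam 0) = (a₀ : X); rw [lam.source]; exact hpz),
        Subtype.ext (by show p (lam 1) = (a₀ : X); rw [lam.target]; exact hpx)⟩ with hα
    set β : Path (a₀ : X) (a₀ : X) :=
      (α.map i.hom.continuous).cast (hi a₀).symm (hi a₀).symm with hβdef
    have hβ : ∀ t, β t = p (lam t) := fun t => by
      show i (α t) = p (lam t)
      rw [hi]
      rfl
    set Γp : Path xhat₀ zz := hp.liftPath' δ xhat₀ hpx with hΓp
    set κ : Path xhat₀ xhat₀ := Γp.trans lam with hκdef
    set uElt : FundamentalGroup X (a₀ : X) :=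
      FundamentalGroup.fromPath ⟦(κ.map p.hom.continuous).cast hpx.symm hpx.symm⟧ with huE
    set vElt : FundamentalGroup X (a₀ : X) := FundamentalGroup.fromPath ⟦β.symm⟧ with hvE
    have huMem : uElt ∈ (hpx ▸ (inducedHom p xhat₀).range :
        Subgroup (FundamentalGroup X (a₀ : X))) := (hU uElt).2 ⟨κ, rfl⟩
    have hvMem : vElt ∈ (hi a₀ ▸ (inducedHom i a₀).range :
        Subgroup (FundamentalGroup X (a₀ : X))) := by
      refine (hV vElt).2 ⟨α.symm, ?_⟩
      show (⟦β.symm⟧ : Path.Homotopic.Quotient (a₀ : X) (a₀ : X)) = _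
      have hps : β.symm = (α.symm.map i.hom.continuous).cast (hi a₀).symm (hi a₀).symm := by
        apply Path.ext
        funext t
        rfl
      rw [hps]
    have hκ : (κ.map p.hom.continuous).cast hpx.symm hpx.symm = δ.trans β := by
      apply Path.ext
      funext t
      show p (κ t) = (δ.trans β) t
      rw [show κ t = (Γp.trans lam) t from rfl, Path.trans_apply, Path.trans_apply]
      split_ifs with h
      · exact hp.liftP_proj δ xhat₀ hpx _
      · exact (hβ _).symm
    have hg : g = vElt * uElt := by
      apply aut_ext'
      show g.toPath = Path.Homotopic.Quotient.trans
        (⟦(κ.map p.hom.continuous).cast hpx.symm hpx.symm⟧ :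
          Path.Homotopic.Quotient (a₀ : X) (a₀ : X)) ⟦β.symm⟧
      rw [hκ, ← hδ]
      have h1 : Path.Homotopic ((δ.trans β).trans β.symm) (δ.trans (β.trans β.symm)) :=
        ⟨Path.Homotopy.transAssoc δ β β.symm⟩
      have h2 : Path.Homotopic (β.trans β.symm) (Path.refl (a₀ : X)) :=
        ⟨(Path.Homotopy.reflTransSymm β).symm⟩
      have h3 : Path.Homotopic (δ.trans (β.trans β.symm)) (δ.trans (Path.refl (a₀ : X))) :=
        (Path.Homotopic.refl δ).hcomp h2
      have h4 : Path.Homotopic (δ.trans (Path.refl (a₀ : X))) δ :=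
        ⟨Path.Homotopy.transRefl δ⟩
      exact (Quotient.sound ((h1.trans h3).trans h4)).symm
    exact ⟨vElt, hvMem, uElt, huMem, hg⟩
  · -- the decomposition implies path connectedness
    intro hdecomp
    refine ⟨xhat₀, hxhat₀, ?_⟩
    intro yy hyy
    have hpyy : p yy ∈ A := hyy
    have Jβ : JoinedIn A (p yy) (a₀ : X) := hA.joinedIn (p yy) hpyy (a₀ : X) hx₀A
    set βp := Jβ.somePath with hβp0
    have hβp := Jβ.somePath_mem
    set zz := hp.liftP βp yy rfl 1 with hzz
    have hseg1 : JoinedIn (⇑p ⁻¹' A) yy zz :=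
      ⟨hp.liftPath' βp yy rfl, fun t => by
        rw [Set.mem_preimage]
        show p (hp.liftP βp yy rfl t) ∈ A
        rw [hp.liftP_proj]; exact hβp t⟩
    have hpz : p zz = (a₀ : X) := by rw [hzz, hp.liftP_proj]; exact βp.target
    set η := PathConnectedSpace.somePath xhat₀ zz with hη
    set δ : Path (a₀ : X) (a₀ : X) := (η.map p.hom.continuous).cast hpx.symm hpz.symm with hδdef
    obtain ⟨v, hvMem, u, huMem, hguv⟩ :=
      (swap_mul hnorm (FundamentalGroup.fromPath ⟦δ⟧)).1
        (hdecomp (FundamentalGroup.fromPath ⟦δ⟧))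
    obtain ⟨gg, hgg⟩ := (hU u).1 huMem
    obtain ⟨α, hα⟩ := (hV v).1 hvMem
    set κp : Path (a₀ : X) (a₀ : X) := (gg.map p.hom.continuous).cast hpx.symm hpx.symm with hκp
    set β : Path (a₀ : X) (a₀ : X) :=
      (α.map i.hom.continuous).cast (hi a₀).symm (hi a₀).symm with hβdef
    have hhom : Path.Homotopic δ (κp.trans β) := by
      have h1 : (⟦δ⟧ : Path.Homotopic.Quotient (a₀ : X) (a₀ : X)) =
          Path.Homotopic.Quotient.trans u.toPath v.toPath := hguv
      rw [hgg, hα] at h1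
      have hq : (⟦δ⟧ : Path.Homotopic.Quotient (a₀ : X) (a₀ : X)) =
          ⟦κp.trans β⟧ := h1.trans (Path.Homotopic.Quotient.mk_trans κp β).symm
      exact Quotient.exact hq
    have E1 : η 1 = hp.liftP δ xhat₀ hpx 1 :=
      hp.liftP_unique δ xhat₀ hpx η.toContinuousMap η.source (fun s => rfl) 1
    have E2 : hp.liftP δ xhat₀ hpx 1 = hp.liftP (κp.trans β) xhat₀ hpx 1 :=
      hp.liftP_homotopic _ _ hhom _ _
    have hw' : p (hp.liftP κp xhat₀ hpx 1) = (a₀ : X) := by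
      rw [hp.liftP_proj]; exact κp.target
    have E3 := hp.liftP_trans κp β xhat₀ hpx hw'
    have E4 : gg 1 = hp.liftP κp xhat₀ hpx 1 :=
      hp.liftP_unique κp xhat₀ hpx gg.toContinuousMap gg.source (fun s => rfl) 1
    have hw : hp.liftP κp xhat₀ hpx 1 = xhat₀ := by rw [← E4]; exact gg.target
    have hfinal : hp.liftP β (hp.liftP κp xhat₀ hpx 1) hw' 1 = zz := by
      rw [← E3, ← E2, ← E1]
      exact η.target
    have hseg2 : JoinedIn (⇑p ⁻¹' A) (hp.liftP κp xhat₀ hpx 1) zz := by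
      refine ⟨(hp.liftPath' β (hp.liftP κp xhat₀ hpx 1) hw').cast rfl hfinal.symm, fun t => ?_⟩
      rw [Set.mem_preimage]
      show p (hp.liftP β (hp.liftP κp xhat₀ hpx 1) hw' t) ∈ A
      rw [hp.liftP_proj]
      show i (α t) ∈ A
      rw [hi]
      exact (α t).2
    rw [hw] at hseg2
    exact hseg2.trans hseg1.symm
end

section
/- Let F₂ be the free group on generators t₁, t₂ and let w₁ ∈ F₂ be an element that is not a conjugate of any power t₁ᵏ. Then there exists n ∈ ℕ such that the reduced word representing t₁ⁿ w₁ t₁⁻ⁿ has the form t₁^{k} z t₁^{-h} with h ≥ 1, k ≥ 1 and z a nonempty reduced word whose first and last letters are t₂^{±1}. -/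
namespace Aux
open FreeGroup List

variable {α : Type*} [DecidableEq α]
set_option linter.unusedSectionVars false

def P (a b : α × Bool) : Prop := ¬(a.1 = b.1 ∧ a.2 = !b.2)

instance : DecidableRel (P (α := α)) := fun a b => by unfold P; infer_instance

lemma reduce_eq_self_iff (L : List (α × Bool)) :
    FreeGroup.reduce L = L ↔ List.Chain' P L := by
  induction L with
  | nil => simp [List.Chain']
  | cons x L ih =>
    rw [FreeGroup.reduce.cons]
    rcases hr : FreeGroup.reduce L with _ | ⟨hd, tl⟩
    · dsimp only
      constructor
      · intro h
        obtain rfl : L = [] := by injection h with h1 h2; exact h2.symm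
        simp [List.Chain']
      · intro h
        have hL : FreeGroup.reduce L = L := ih.mpr h.tail
        rw [hL] at hr
        subst hr; rfl
    · dsimp only
      split_ifs with hc
      · constructor
        · intro h
          exfalso
          have hred := FreeGroup.reduce.red (L := L)
          rw [hr] at hred
          have hs := hred.sublist.length_le
          subst h
          simp at hs
        · intro h
          exfalso
          have hL : FreeGroup.reduce L = L := ih.mpr h.tail
          rw [hL] at hr
          subst hr
          rw [List.Chain', List.isChain_cons] at h
          exact h.1 hd rfl hc
      · constructor
        · intro h
          obtain rfl : L = hd :: tl := by injection h with h1 h2; exact h2.symm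
          rw [List.Chain', List.isChain_cons]
          refine ⟨?_, ih.mp hr⟩
          intro y hy
          simp at hy
          subst hy
          exact hc
        · intro h
          rw [List.Chain', List.isChain_cons] at h
          have hL : FreeGroup.reduce L = L := ih.mpr h.2
          rw [hL] at hr
          subst hr
          rfl

lemma replicate_of_chain' {a : α} {L : List (α × Bool)} (hC : List.Chain' P L)
    (hall : ∀ x ∈ L, x.1 = a) : ∃ c : Bool, L = List.replicate L.length (a, c) := by
  induction L with
  | nil => exact ⟨true, rfl⟩
  | cons x L ih =>
    obtain ⟨c, hc⟩ := ih hC.tail (fun y hy => hall y (List.mem_cons_of_mem _ hy))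
    have hx1 : x.1 = a := hall x (List.mem_cons_self ..)
    rcases L with _ | ⟨y, L⟩
    · exact ⟨x.2, by simp [List.replicate, ← hx1]⟩
    · refine ⟨c, ?_⟩
      rw [List.Chain', List.isChain_cons] at hC
      have hy : y = (a, c) := by
        have := congrArg (fun l => l.head?) hc
        simpa [List.replicate_succ] using this
      have hP : P x y := hC.1 y (by simp)
      rw [hy] at hP
      unfold P at hP
      have hx2 : x.2 = c := by
        rcases Bool.eq_false_or_eq_true x.2 with h | h <;> rcases Bool.eq_false_or_eq_true c with h' | h' <;>
          simp_all
      have hx : x = (a, c) := Prod.ext hx1 hx2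
      rw [hx, List.length_cons, List.replicate_succ]
      exact congrArg (List.cons _) hc

lemma invRev_replicate (n : ℕ) (a : α) (b : Bool) :
    FreeGroup.invRev (List.replicate n (a, b)) = List.replicate n (a, !b) := by
  simp [FreeGroup.invRev, List.map_replicate, List.reverse_replicate]

end Aux


lemma mk_replicate (m : ℕ) (c : Bool) :
    FreeGroup.mk (List.replicate m ((0 : Fin 2), c)) = t1 ^ (if c then (m : ℤ) else -(m : ℤ)) := by
  have hpow : t1 ^ m = FreeGroup.mk (List.replicate m ((0 : Fin 2), true)) := by
    apply FreeGroup.toWord_injective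
    rw [FreeGroup.toWord_mk, FreeGroup.reduce_replicate, t1, FreeGroup.toWord_of_pow]
  cases c with
  | true => simp [zpow_natCast, hpow]
  | false =>
    have h2 : FreeGroup.mk (List.replicate m ((0 : Fin 2), false)) =
        (FreeGroup.mk (List.replicate m ((0 : Fin 2), true)))⁻¹ := by
      rw [FreeGroup.inv_mk, Aux.invRev_replicate, Bool.not_true]
    rw [if_neg (by simp), h2, ← hpow, ← zpow_natCast, ← zpow_neg]


/-- If `w₁ ∈ F₂` is not conjugate to any power of `t₁`, then for some `n ∈ ℕ` the reduced
word of `t₁ⁿ w₁ t₁⁻ⁿ` has the form `t₁^k z t₁^{-h}` with `h, k ≥ 1` and `z` a nonempty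
reduced word whose first and last letters are `t₂^{±1}`. -/
theorem stmt16 (w₁ : F2) (hw : ∀ (g : F2) (k : ℤ), w₁ ≠ g * t1 ^ k * g⁻¹) :
    ∃ (n : ℕ) (k h : ℕ) (z : List (Fin 2 × Bool)),
      1 ≤ k ∧ 1 ≤ h ∧ z ≠ [] ∧
      (z.head?).map Prod.fst = some 1 ∧
      (z.getLast?).map Prod.fst = some 1 ∧
      (t1 ^ n * w₁ * (t1 ^ n)⁻¹).toWord =
        List.replicate k ((0 : Fin 2), true) ++ z ++ List.replicate h ((0 : Fin 2), false) := by
  classical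
  set L := w₁.toWord with hLdef
  have hone : ∀ v : Fin 2, v ≠ 0 → v = 1 := by decide
  have hLred : FreeGroup.reduce L = L := w₁.reduce_toWord
  have hLC : List.Chain' Aux.P L := (Aux.reduce_eq_self_iff L).mp hLred
  have hw1L : w₁ = FreeGroup.mk L := (FreeGroup.mk_toWord).symm
  -- there is a letter with fst ≠ 0
  have hex : ∃ x ∈ L, x.1 ≠ (0 : Fin 2) := by
    by_contra hno
    push_neg at hno
    obtain ⟨c, hcL⟩ := Aux.replicate_of_chain' hLC hno
    rw [hcL, mk_replicate] at hw1L
    exact hw 1 _ (by rw [one_mul, inv_one, mul_one]; exact hw1L)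
  set p : Fin 2 × Bool → Bool := fun x => decide (x.1 = 0) with hp
  set A := L.takeWhile p with hAdef
  set R := L.dropWhile p with hRdef
  have hAR : A ++ R = L := L.takeWhile_append_dropWhile (p := p)
  have hRne : R ≠ [] := by
    intro hnil
    obtain ⟨x, hxL, hx1⟩ := hex
    rw [hRdef, List.dropWhile_eq_nil_iff] at hnil
    exact hx1 (by simpa [hp] using hnil x hxL)
  have hRhead : p (R.head hRne) = false := List.head_dropWhile_not p hRne
  have hRhead1 : (R.head hRne).1 = 1 := hone _ (by simpa [hp] using hRhead)
  set z' := R.reverse.dropWhile p with hz'def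
  set B' := R.reverse.takeWhile p with hB'def
  have hRrev : B' ++ z' = R.reverse := R.reverse.takeWhile_append_dropWhile (p := p)
  have hz'ne : z' ≠ [] := by
    intro hnil
    rw [hz'def, List.dropWhile_eq_nil_iff] at hnil
    have hmem : R.head hRne ∈ R.reverse := by
      rw [List.mem_reverse]; exact List.head_mem hRne
    exact absurd (hnil _ hmem) (by simpa using hRhead)
  have hz'head : p (z'.head hz'ne) = false := List.head_dropWhile_not p hz'ne
  have hz'head1 : (z'.head hz'ne).1 = 1 := hone _ (by simpa [hp] using hz'head)
  set z := z'.reverse with hzdef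
  set B := B'.reverse with hBdef
  have hzne : z ≠ [] := by simpa [hzdef] using hz'ne
  have hzB : z ++ B = R := by
    rw [hzdef, hBdef, ← List.reverse_append, hRrev, List.reverse_reverse]
  have hL2 : A ++ z ++ B = L := by rw [List.append_assoc, hzB, hAR]
  -- chains
  have hAC : List.Chain' Aux.P A := hLC.infix ⟨[], z ++ B, by simpa using hL2⟩
  have hzC : List.Chain' Aux.P z := hLC.infix ⟨A, B, by simpa using hL2⟩
  have hBC : List.Chain' Aux.P B := hLC.infix ⟨A ++ z, [], by simpa using hL2⟩
  -- A and B are replicates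
  obtain ⟨ca, hA⟩ := Aux.replicate_of_chain' hAC (fun x hx => by
    simpa [hp] using List.mem_takeWhile_imp hx)
  obtain ⟨cb, hB⟩ := Aux.replicate_of_chain' hBC (fun x hx => by
    have : x ∈ B' := by rwa [hBdef, List.mem_reverse] at hx
    simpa [hp] using List.mem_takeWhile_imp this)
  have hBlen : B.length = B'.length := by simp [hBdef]
  set a := A.length with hadef
  set b := B.length with hbdef
  set ea : ℤ := if ca then (a : ℤ) else -(a : ℤ) with headef
  set eb : ℤ := if cb then (b : ℤ) else -(b : ℤ) with hebdef
  have hea : -(a:ℤ) ≤ ea ∧ ea ≤ (a:ℤ) := by rcases ca <;> simp [headef]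
  have heb : -(b:ℤ) ≤ eb ∧ eb ≤ (b:ℤ) := by rcases cb <;> simp [hebdef]
  have hw1 : w₁ = t1 ^ ea * FreeGroup.mk z * t1 ^ eb := by
    rw [hw1L, ← hL2, ← FreeGroup.mul_mk, ← FreeGroup.mul_mk, hA, hB, mk_replicate, mk_replicate]
  set n := a + b + 1 with hndef
  set k := ((n : ℤ) + ea).toNat with hkdef
  set hh := ((n : ℤ) - eb).toNat with hhdef
  have hk1 : 1 ≤ ((n : ℤ) + ea) := by omega
  have hh1 : 1 ≤ ((n : ℤ) - eb) := by omega
  have hkc : (k : ℤ) = (n : ℤ) + ea := Int.toNat_of_nonneg (by omega)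
  have hhc : (hh : ℤ) = (n : ℤ) - eb := Int.toNat_of_nonneg (by omega)
  have hzhead? : z.head? = some (R.head hRne) := by
    rw [← List.head?_eq_head hRne, ← hzB, List.head?_append_of_ne_nil _ hzne]
  have hzlast? : z.getLast? = some (z'.head hz'ne) := by
    rw [hzdef, List.getLast?_reverse, List.head?_eq_head hz'ne]
  have hk0 : k ≠ 0 := by omega
  have hh0 : hh ≠ 0 := by omega
  have hPr : Aux.P ((0 : Fin 2), true) ((0 : Fin 2), true) := by simp [Aux.P]
  have hPr' : Aux.P ((0 : Fin 2), false) ((0 : Fin 2), false) := by simp [Aux.P]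
  have chainM : List.Chain' Aux.P (List.replicate k ((0 : Fin 2), true) ++ z ++
      List.replicate hh ((0 : Fin 2), false)) := by
    rw [List.append_assoc]
    refine List.isChain_append.mpr ⟨List.isChain_replicate_of_rel _ hPr, ?_, ?_⟩
    · refine List.isChain_append.mpr ⟨hzC, List.isChain_replicate_of_rel _ hPr', ?_⟩
      intro x hx y hy
      rw [List.head?_replicate, if_neg hh0] at hy
      rw [hzlast?] at hx
      obtain rfl : z'.head hz'ne = x := by simpa using hx
      obtain rfl : ((0 : Fin 2), false) = y := by simpa using hy
      intro ⟨h1, _⟩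
      rw [hz'head1] at h1
      exact absurd h1 (by decide)
    · intro x hx y hy
      rw [List.getLast?_replicate, if_neg hk0] at hx
      obtain rfl : ((0 : Fin 2), true) = x := by simpa using hx
      rw [List.head?_append_of_ne_nil _ hzne, hzhead?] at hy
      obtain rfl : R.head hRne = y := by simpa using hy
      intro ⟨h1, _⟩
      rw [hRhead1] at h1
      exact absurd h1 (by decide)
  have hkrep : FreeGroup.mk (List.replicate k ((0 : Fin 2), true)) = t1 ^ ((n : ℤ) + ea) := by
    rw [mk_replicate, if_pos rfl, hkc]
  have hhrep : FreeGroup.mk (List.replicate hh ((0 : Fin 2), false)) = t1 ^ (eb - (n : ℤ)) := by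
    rw [mk_replicate, if_neg (by simp), hhc]
    norm_num
  have key : t1 ^ n * w₁ * (t1 ^ n)⁻¹ =
      FreeGroup.mk (List.replicate k ((0 : Fin 2), true) ++ z ++
        List.replicate hh ((0 : Fin 2), false)) := by
    rw [← FreeGroup.mul_mk, ← FreeGroup.mul_mk, hkrep, hhrep, hw1, ← zpow_natCast t1 n]
    rw [zpow_add, zpow_sub]
    group
  refine ⟨n, k, hh, z, by omega, by omega, hzne, ?_, ?_, ?_⟩
  · rw [hzhead?]
    simp [hRhead1]
  · rw [hzlast?]
    simp [hz'head1]
  · rw [key, FreeGroup.toWord_mk]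
    exact (Aux.reduce_eq_self_iff _).mpr chainM
end

section
/- Let F₂ be the free group on generators t₁, t₂ and let φ : F(g₁,g₂,n₁,n₂) → F₂ be the homomorphism from the free group on four letters defined by φ(g₁) = w₁, φ(g₂) = w₂, φ(n₁) = φ(n₂) = 1, where w₁, w₂ ∈ F₂ freely generate a rank-2 subgroup. Then ker φ equals the normal closure of {n₁, n₂} in F(g₁,g₂,n₁,n₂). -/
/-- Let `φ : F(g₁,g₂,n₁,n₂) → F₂` send `g₁ ↦ w₁`, `g₂ ↦ w₂`, `n₁, n₂ ↦ 1`, where `w₁, w₂`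
freely generate a rank-2 subgroup of `F₂`.  Then `ker φ` is the normal closure of `{n₁, n₂}`. -/
theorem stmt19 (w₁ w₂ : F2)
    (hfree : Function.Injective
      (FreeGroup.lift (fun x : Bool => if x then w₁ else w₂) : FreeGroup Bool →* F2))
    (φ : FreeGroup (Fin 4) →* F2)
    (hφ : φ = FreeGroup.lift (![w₁, w₂, 1, 1] : Fin 4 → F2)) :
    φ.ker = Subgroup.normalClosure
      ({FreeGroup.of 2, FreeGroup.of 3} : Set (FreeGroup (Fin 4))) := by
  set N := Subgroup.normalClosure
      ({FreeGroup.of 2, FreeGroup.of 3} : Set (FreeGroup (Fin 4))) with hNdef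
  have hN : N.Normal := Subgroup.normalClosure_normal
  set π : FreeGroup (Fin 4) →* FreeGroup Bool :=
    FreeGroup.lift (![FreeGroup.of true, FreeGroup.of false, 1, 1]) with hπ
  set ψ : FreeGroup Bool →* FreeGroup (Fin 4) :=
    FreeGroup.lift (fun b => if b then FreeGroup.of 0 else FreeGroup.of 1) with hψ
  have hcomp : ∀ x, FreeGroup.lift (fun x : Bool => if x then w₁ else w₂) (π x) = φ x := by
    intro x
    have : (FreeGroup.lift (fun x : Bool => if x then w₁ else w₂)).comp π = φ := by
      subst hφ
      ext i
      fin_cases i <;> simp [hπ]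
    exact DFunLike.congr_fun this x
  have hmem2 : FreeGroup.of (2 : Fin 4) ∈ N :=
    Subgroup.subset_normalClosure (by simp)
  have hmem3 : FreeGroup.of (3 : Fin 4) ∈ N :=
    Subgroup.subset_normalClosure (by simp)
  have key : ∀ x : FreeGroup (Fin 4), x * (ψ (π x))⁻¹ ∈ N := by
    intro x
    induction x using FreeGroup.induction_on with
    | C1 => simpa using N.one_mem
    | of i =>
      show FreeGroup.of i * (ψ (π (FreeGroup.of i)))⁻¹ ∈ N
      fin_cases i
      · simpa [hπ, hψ] using N.one_mem
      · simpa [hπ, hψ] using N.one_mem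
      · simpa [hπ, hψ] using hmem2
      · simpa [hπ, hψ] using hmem3
    | inv_of i ih =>
      show (FreeGroup.of i)⁻¹ * (ψ (π (FreeGroup.of i)⁻¹))⁻¹ ∈ N
      replace ih : FreeGroup.of i * (ψ (π (FreeGroup.of i)))⁻¹ ∈ N := ih
      have h := hN.conj_mem _ (N.inv_mem ih) ((ψ (π (FreeGroup.of i)))⁻¹)
      have heq : (ψ (π (FreeGroup.of i)))⁻¹ *
          (FreeGroup.of i * (ψ (π (FreeGroup.of i)))⁻¹)⁻¹ *
          ((ψ (π (FreeGroup.of i)))⁻¹)⁻¹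
          = (FreeGroup.of i)⁻¹ * (ψ (π (FreeGroup.of i)⁻¹))⁻¹ := by
        rw [map_inv, map_inv]; group
      rwa [heq] at h
    | mul x y hx hy =>
      have h1 := hN.conj_mem _ hy x
      have h2 := N.mul_mem h1 hx
      have : x * (y * (ψ (π y))⁻¹) * x⁻¹ * (x * (ψ (π x))⁻¹)
          = x * y * (ψ (π (x * y)))⁻¹ := by
        simp [mul_assoc]
      rwa [this] at h2
  ext x
  constructor
  · intro hx
    have hπx : π x = 1 := by
      apply hfree
      rw [hcomp x, map_one]
      exact hx
    have := key x
    rwa [hπx, map_one, inv_one, mul_one] at this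
  · intro hx
    have hle : N ≤ φ.ker := by
      apply Subgroup.normalClosure_le_normal
      intro y hy
      rcases hy with h | h <;> subst h <;>
        simp [hφ, MonoidHom.mem_ker]
    exact hle hx
end
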